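/- Let m ≥ 1, α > m − 1 and β > −1, let P be the monic polynomial of degree n with ∫_0^1 P(x) x^{β}(1−x)^{α} x^k dx = 0 for k = 0, …, n−1, and let Q be the monic polynomial of degree n with ∫_0^1 Q(x) x^{β+m}(1−x)^{α−m} x^k dx = 0 for k = 0, …, n−1. Then for all x ∈ (0,1): d^m/dx^m [ (1−x)^α P(x) ] = (−1)^m (α + n − m + 1)_m (1−x)^{α−m} Q(x), where (a)_m = a(a+1)⋯(a+m−1) is the Pochhammer symbol. -/

import Mathlib

open MeasureTheory Polynomial Set Filter

noncomputable def Tstep (c : ℝ) (R : ℝ[X]) : ℝ[X] :=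
  (1 - Polynomial.X) * R.derivative - Polynomial.C c * R

noncomputable def Rseq (α : ℝ) (P : ℝ[X]) : ℕ → ℝ[X]
  | 0 => P
  | (j+1) => Tstep (α - j) (Rseq α P j)

lemma Tstep_eval (c : ℝ) (R : ℝ[X]) (x : ℝ) :
    (Tstep c R).eval x = (1 - x) * R.derivative.eval x - c * R.eval x := by
  simp [Tstep]

lemma hasDerivAt_g (α : ℝ) (P : ℝ[X]) (j : ℕ) {x : ℝ} (hx : x ∈ Set.Ioo (0:ℝ) 1) :
    HasDerivAt (fun y => (1 - y) ^ (α - j) * (Rseq α P j).eval y)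
      ((1 - x) ^ (α - (j+1:ℕ)) * (Rseq α P (j+1)).eval x) x := by
  obtain ⟨hx0, hx1⟩ := hx
  have h1x : (0:ℝ) < 1 - x := by linarith
  have h1 : HasDerivAt (fun y : ℝ => (1 - y) ^ (α - j))
      ((α - j) * (1 - x) ^ (α - j - 1) * (-1)) x := by
    have hbase : HasDerivAt (fun y : ℝ => 1 - y) (-1) x := by
      exact (hasDerivAt_id' x).const_sub 1
    exact (Real.hasDerivAt_rpow_const (x := 1 - x) (p := α - j)
      (Or.inl h1x.ne')).comp x hbase
  have h2 : HasDerivAt (fun y : ℝ => (Rseq α P j).eval y)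
      ((Rseq α P j).derivative.eval x) x := (Rseq α P j).hasDerivAt x
  have := h1.mul h2
  refine this.congr_deriv (Eq.symm ?_)
  have hsplit : (1 - x) ^ (α - j) = (1 - x) ^ (α - j - 1) * (1 - x) := by
    rw [← Real.rpow_add_one h1x.ne']; ring_nf
  have hexp : α - ((j:ℝ) + 1) = α - j - 1 := by ring
  show (1 - x) ^ (α - ((j+1:ℕ):ℝ)) * (Rseq α P (j+1)).eval x = _
  push_cast
  rw [hexp, Rseq, Tstep_eval, hsplit]
  ring

lemma iteratedDeriv_eq (α : ℝ) (P : ℝ[X]) (j : ℕ) :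
    ∀ x ∈ Set.Ioo (0:ℝ) 1,
      iteratedDeriv j (fun y => (1 - y) ^ α * P.eval y) x
        = (1 - x) ^ (α - j) * (Rseq α P j).eval x := by
  induction j with
  | zero => intro x hx; simp [Rseq]
  | succ j ih =>
    intro x hx
    rw [iteratedDeriv_succ]
    have hev : (iteratedDeriv j (fun y => (1 - y) ^ α * P.eval y))
        =ᶠ[nhds x] (fun y => (1 - y) ^ (α - j) * (Rseq α P j).eval y) := by
      filter_upwards [isOpen_Ioo.mem_nhds hx] with y hy
      exact ih y hy
    rw [hev.deriv_eq]
    exact (hasDerivAt_g α P j hx).deriv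

lemma Tstep_coeff_top {n : ℕ} {R : ℝ[X]} (hR : R.natDegree ≤ n) (c : ℝ) :
    (Tstep c R).coeff n = -(c + n) * R.coeff n := by
  have hd : (derivative R).coeff n = 0 := by
    rw [coeff_derivative, coeff_eq_zero_of_natDegree_lt (by omega : R.natDegree < n + 1)]
    ring
  have hXd : (Polynomial.X * derivative R).coeff n = n * R.coeff n := by
    cases n with
    | zero => simp
    | succ k => rw [coeff_X_mul]; rw [coeff_derivative]; push_cast; ring
  simp only [Tstep, sub_mul, one_mul, coeff_sub, coeff_C_mul, hd, hXd]
  ring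

lemma Tstep_natDegree_le {n : ℕ} {R : ℝ[X]} (hR : R.natDegree ≤ n) (c : ℝ) :
    (Tstep c R).natDegree ≤ n := by
  unfold Tstep
  apply le_trans (natDegree_sub_le _ _)
  apply max_le
  · rcases Nat.eq_zero_or_pos n with hn | hn
    · subst hn
      have hzero : R.derivative = 0 := by
        rw [Polynomial.eq_C_of_natDegree_le_zero hR]; simp
      simp [hzero]
    · apply le_trans natDegree_mul_le
      have h1 : (1 - Polynomial.X : ℝ[X]).natDegree ≤ 1 := by
        apply le_trans (natDegree_sub_le _ _); simp
      have h2 : R.derivative.natDegree ≤ n - 1 :=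
        le_trans (natDegree_derivative_le R) (by omega)
      omega
  · exact le_trans (natDegree_C_mul_le _ _) hR

lemma Rseq_natDegree_le (α : ℝ) (P : ℝ[X]) {n : ℕ} (hP : P.natDegree ≤ n) (j : ℕ) :
    (Rseq α P j).natDegree ≤ n := by
  induction j with
  | zero => exact hP
  | succ j ih => exact Tstep_natDegree_le ih _

lemma Rseq_coeff_top (α : ℝ) (P : ℝ[X]) {n : ℕ} (hP : P.natDegree ≤ n) (j : ℕ) :
    (Rseq α P j).coeff n = (∏ i ∈ Finset.range j, (-(α - i + n))) * P.coeff n := by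
  induction j with
  | zero => simp [Rseq]
  | succ j ih =>
    rw [show Rseq α P (j+1) = Tstep (α - j) (Rseq α P j) from rfl,
      Tstep_coeff_top (Rseq_natDegree_le α P hP j), ih, Finset.prod_range_succ]
    ring


lemma integrableOn_weight_poly (a b : ℝ) (ha : -1 < a) (hb : -1 < b) (R : ℝ[X]) :
    IntegrableOn (fun x => (1 - x) ^ a * R.eval x * x ^ b) (Set.Ioo (0:ℝ) 1) := by
  have half : IntegrableOn (fun x => (1 - x) ^ a * R.eval x * x ^ b)
      (Set.Icc (0:ℝ) (1/2)) := by
    have hint : IntegrableOn (fun x : ℝ => x ^ b) (Set.Icc (0:ℝ) (1/2)) := by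
      rw [integrableOn_Icc_iff_integrableOn_Ioc]
      have := (intervalIntegral.intervalIntegrable_rpow' (a := 0) (b := 1/2) hb)
      rwa [intervalIntegrable_iff_integrableOn_Ioc_of_le (by norm_num)] at this
    have hcont : ContinuousOn (fun x : ℝ => (1 - x) ^ a * R.eval x)
        (Set.Icc (0:ℝ) (1/2)) := by
      apply ContinuousOn.mul _ (R.continuous.continuousOn)
      intro x hx
      apply ContinuousAt.continuousWithinAt
      apply ContinuousAt.rpow_const (by fun_prop)
      left
      have h2 : x ≤ 1/2 := hx.2
      intro hc; rw [sub_eq_zero] at hc; linarith [hc.symm]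
    exact hint.continuousOn_mul hcont isCompact_Icc
  have half2 : IntegrableOn (fun x => (1 - x) ^ a * R.eval x * x ^ b)
      (Set.Icc (1/2 : ℝ) 1) := by
    have hint : IntegrableOn (fun x : ℝ => (1 - x) ^ a) (Set.Icc (1/2 : ℝ) 1) := by
      rw [integrableOn_Icc_iff_integrableOn_Ioc]
      have h0 : IntervalIntegrable (fun x : ℝ => x ^ a) volume 0 (1/2) :=
        intervalIntegral.intervalIntegrable_rpow' ha
      have h1 := h0.comp_sub_left 1
      rw [show (1:ℝ) - 0 = 1 by norm_num, show (1:ℝ) - 1/2 = 1/2 by norm_num] at h1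
      have h2 := h1.symm
      rwa [intervalIntegrable_iff_integrableOn_Ioc_of_le (by norm_num)] at h2
    have hcont : ContinuousOn (fun x : ℝ => x ^ b * R.eval x)
        (Set.Icc (1/2 : ℝ) 1) := by
      apply ContinuousOn.mul _ (R.continuous.continuousOn)
      intro x hx
      apply ContinuousAt.continuousWithinAt
      apply ContinuousAt.rpow_const (by fun_prop)
      left
      have h2 : (1:ℝ)/2 ≤ x := hx.1
      intro hc; rw [hc] at h2; linarith
    have := hint.continuousOn_mul hcont isCompact_Icc
    apply this.congr_fun _ measurableSet_Icc
    intro x hx; ring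
  have := half.union half2
  apply this.mono_set
  intro x hx
  rcases le_or_gt x (1/2) with h | h
  · exact Or.inl ⟨le_of_lt hx.1, h⟩
  · exact Or.inr ⟨le_of_lt h, le_of_lt hx.2⟩

lemma orth_Rseq (m : ℕ) (α β : ℝ) (hα : (m:ℝ) - 1 < α) (hβ : -1 < β)
    (n : ℕ) (P : ℝ[X])
    (hPorth : ∀ k < n, ∫ x in Set.Ioo (0:ℝ) 1, P.eval x * (x ^ β * (1 - x) ^ α) * x ^ k = 0)
    (k : ℕ) (hk : k < n) :
    ∫ x in Set.Ioo (0:ℝ) 1,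
      (1 - x) ^ (α - m) * (Rseq α P m).eval x * x ^ (β + k + m) = 0 := by
  have key : ∀ j, j ≤ m → ∫ x in Set.Ioo (0:ℝ) 1,
      (1 - x) ^ (α - j) * (Rseq α P j).eval x * x ^ (β + k + j) = 0 := by
    intro j
    induction j with
    | zero =>
      intro _
      have h0 := hPorth k hk
      refine Eq.trans ?_ h0
      apply setIntegral_congr_fun measurableSet_Ioo
      intro x hx
      have hx0 : (0:ℝ) < x := hx.1
      simp only [Nat.cast_zero, sub_zero, add_zero]
      rw [Real.rpow_add hx0, Real.rpow_natCast]
      simp only [Rseq]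
      ring
    | succ j ih =>
      intro hj1
      have hj : j < m := by omega
      have IH := ih (le_of_lt hj)
      have hjm : (j:ℝ) ≤ (m:ℝ) - 1 := by
        have : (j:ℝ) + 1 ≤ m := by exact_mod_cast hj
        linarith
      have hαj : (0:ℝ) < α - j := by linarith
      have hαj1 : (-1:ℝ) < α - (j+1:ℕ) := by push_cast; linarith
      have hk0 : (0:ℝ) ≤ k := Nat.cast_nonneg k
      have hj0 : (0:ℝ) ≤ j := Nat.cast_nonneg j
      have hs : (0:ℝ) < β + k + j + 1 := by linarith
      set s : ℝ := β + k + j + 1 with hs_def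
      set F : ℝ → ℝ := fun x => (1 - x) ^ (α - j) * (Rseq α P j).eval x * x ^ s with hF
      set G : ℝ → ℝ := fun x =>
        (1 - x) ^ (α - (j+1:ℕ)) * (Rseq α P (j+1)).eval x * x ^ s
          + s * ((1 - x) ^ (α - j) * (Rseq α P j).eval x * x ^ (β + k + j)) with hG
      have hder : ∀ x ∈ Set.Ioo (0:ℝ) 1, HasDerivAt F (G x) x := by
        intro x hx
        have hx0 : (0:ℝ) < x := hx.1
        have h1 := (hasDerivAt_g α P j hx).mul
          (Real.hasDerivAt_rpow_const (x := x) (p := s) (Or.inl hx0.ne'))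
        refine h1.congr_deriv (Eq.symm ?_)
        rw [hG]
        have hexp : s - 1 = β + k + j := by rw [hs_def]; ring
        rw [hexp]
        ring
      have hcont : ContinuousOn F (Set.Icc (0:ℝ) 1) := by
        apply Continuous.continuousOn
        apply Continuous.mul
        · apply Continuous.mul _ ((Rseq α P j).continuous)
          exact Continuous.rpow_const (by fun_prop) (fun x => Or.inr hαj.le)
        · exact Continuous.rpow_const continuous_id (fun x => Or.inr hs.le)
      have hIA : IntegrableOn (fun x =>
          (1 - x) ^ (α - (j+1:ℕ)) * (Rseq α P (j+1)).eval x * x ^ s)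
          (Set.Ioo (0:ℝ) 1) :=
        integrableOn_weight_poly _ _ hαj1 (by linarith) _
      have hIB0 : IntegrableOn (fun x =>
          (1 - x) ^ (α - j) * (Rseq α P j).eval x * x ^ (β + k + j))
          (Set.Ioo (0:ℝ) 1) :=
        integrableOn_weight_poly _ _ (by linarith) (by linarith) _
      have hIB : IntegrableOn (fun x =>
          s * ((1 - x) ^ (α - j) * (Rseq α P j).eval x * x ^ (β + k + j)))
          (Set.Ioo (0:ℝ) 1) := hIB0.const_mul s
      have hGI : IntervalIntegrable G volume 0 1 := by
        rw [intervalIntegrable_iff_integrableOn_Ioo_of_le (by norm_num)]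
        exact hIA.add hIB
      have hftc := intervalIntegral.integral_eq_sub_of_hasDerivAt_of_le
        (by norm_num : (0:ℝ) ≤ 1) hcont hder hGI
      have hF1 : F 1 = 0 := by
        rw [hF]; simp only [sub_self]
        rw [Real.zero_rpow hαj.ne']; ring
      have hF0 : F 0 = 0 := by
        rw [hF]; simp only
        rw [Real.zero_rpow hs.ne']; ring
      rw [hF1, hF0, sub_zero, intervalIntegral.integral_of_le (by norm_num : (0:ℝ) ≤ 1),
        integral_Ioc_eq_integral_Ioo] at hftc
      rw [hG] at hftc
      rw [integral_add hIA hIB, integral_const_mul, IH, mul_zero, add_zero] at hftc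
      rw [show β + k + ((j+1:ℕ):ℝ) = s by rw [hs_def]; push_cast; ring]
      exact hftc
  exact key m le_rfl

lemma orth_unique (a b : ℝ) (ha : -1 < a) (hb : -1 < b) (n : ℕ) (A B : ℝ[X])
    (hAm : A.Monic) (hAdeg : A.natDegree = n)
    (hAorth : ∀ k < n, ∫ x in Set.Ioo (0:ℝ) 1, (1 - x) ^ a * A.eval x * x ^ (b + k) = 0)
    (hBm : B.Monic) (hBdeg : B.natDegree = n)
    (hBorth : ∀ k < n, ∫ x in Set.Ioo (0:ℝ) 1, (1 - x) ^ a * B.eval x * x ^ (b + k) = 0) :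
    A = B := by
  rw [← sub_eq_zero]
  by_contra hD0
  set D := A - B with hD
  have hAne : A ≠ 0 := hAm.ne_zero
  have hdegAB : A.degree = B.degree := by
    rw [degree_eq_natDegree hAm.ne_zero, degree_eq_natDegree hBm.ne_zero, hAdeg, hBdeg]
  have hdeg : D.degree < (n : ℕ) := by
    have := degree_sub_lt hdegAB hAne (by rw [hAm.leadingCoeff, hBm.leadingCoeff])
    rwa [degree_eq_natDegree hAm.ne_zero, hAdeg] at this
  have hDdeg : D.natDegree < n := by
    rwa [← natDegree_lt_iff_degree_lt hD0] at hdeg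
  -- integrability of terms
  have hIk : ∀ (R : ℝ[X]) (k : ℕ), IntegrableOn
      (fun x => (1 - x) ^ a * R.eval x * x ^ (b + k)) (Set.Ioo (0:ℝ) 1) := by
    intro R k
    exact integrableOn_weight_poly a (b + k) ha
      (by have : (0:ℝ) ≤ k := Nat.cast_nonneg k; linarith) R
  -- orthogonality of D
  have hDorth : ∀ k < n, ∫ x in Set.Ioo (0:ℝ) 1,
      (1 - x) ^ a * D.eval x * x ^ (b + k) = 0 := by
    intro k hk
    have : (fun x => (1 - x) ^ a * D.eval x * x ^ (b + k))
        = fun x => (1 - x) ^ a * A.eval x * x ^ (b + k)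
            - (1 - x) ^ a * B.eval x * x ^ (b + k) := by
      funext x; rw [hD]; simp [eval_sub]; ring
    rw [this, integral_sub (hIk A k) (hIk B k), hAorth k hk, hBorth k hk, sub_zero]
  -- the squared integral
  set f : ℝ → ℝ := fun x => (1 - x) ^ a * (D.eval x * D.eval x) * x ^ b with hf
  have hfint : IntegrableOn f (Set.Ioo (0:ℝ) 1) := by
    have := integrableOn_weight_poly a b ha hb (D * D)
    apply this.congr_fun _ measurableSet_Ioo
    intro x hx; rw [hf]; simp [eval_mul]
  have hkey : ∫ x in Set.Ioo (0:ℝ) 1, f x = 0 := by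
    have hcong : ∀ x ∈ Set.Ioo (0:ℝ) 1, f x
        = ∑ k ∈ Finset.range n, D.coeff k * ((1 - x) ^ a * D.eval x * x ^ (b + k)) := by
      intro x hx
      have hx0 : (0:ℝ) < x := hx.1
      have hterm : ∀ k ∈ Finset.range n, D.coeff k * ((1 - x) ^ a * D.eval x * x ^ (b + k))
          = ((1 - x) ^ a * D.eval x * x ^ b) * (D.coeff k * x ^ k) := by
        intro k _
        rw [Real.rpow_add hx0, Real.rpow_natCast]
        ring
      rw [Finset.sum_congr rfl hterm, ← Finset.mul_sum,
        ← Polynomial.eval_eq_sum_range' hDdeg x, hf]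
      ring
    rw [setIntegral_congr_fun measurableSet_Ioo hcong]
    rw [integral_finset_sum _ (fun k _ => ((hIk D k).const_mul _))]
    apply Finset.sum_eq_zero
    intro k hk
    rw [integral_const_mul, hDorth k (Finset.mem_range.1 hk), mul_zero]
  have hnonneg : 0 ≤ᵐ[volume.restrict (Set.Ioo (0:ℝ) 1)] f := by
    have hmain : ∀ᵐ x ∂(volume.restrict (Set.Ioo (0:ℝ) 1)), 0 ≤ f x := by
      rw [ae_restrict_iff' measurableSet_Ioo]
      filter_upwards with x hx
      have h1 : (0:ℝ) < 1 - x := by have := hx.2; linarith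
      have h0 : (0:ℝ) < x := hx.1
      have w1 := Real.rpow_pos_of_pos h1 a
      have w2 := Real.rpow_pos_of_pos h0 b
      show (0:ℝ) ≤ (1 - x) ^ a * (D.eval x * D.eval x) * x ^ b
      exact mul_nonneg (mul_nonneg w1.le (mul_self_nonneg _)) w2.le
    filter_upwards [hmain] with x h using h
  have hae : f =ᵐ[volume.restrict (Set.Ioo (0:ℝ) 1)] 0 :=
    (setIntegral_eq_zero_iff_of_nonneg_ae hnonneg hfint).1 hkey
  -- extract: D vanishes on Ioo 0 1
  have hnull : volume ({x : ℝ | f x ≠ 0} ∩ Set.Ioo (0:ℝ) 1) = 0 := by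
    have := ae_iff.1 hae
    rwa [Measure.restrict_apply' measurableSet_Ioo] at this
  have hzero : ∀ x ∈ Set.Ioo (0:ℝ) 1, D.eval x = 0 := by
    by_contra hcon
    push_neg at hcon
    obtain ⟨x₀, hx₀, hx₀ne⟩ := hcon
    set U := {x : ℝ | D.eval x ≠ 0} ∩ Set.Ioo (0:ℝ) 1 with hU
    have hUopen : IsOpen U :=
      (isOpen_compl_iff.2 (isClosed_singleton.preimage D.continuous)).inter isOpen_Ioo
    have hUsub : U ⊆ {x : ℝ | f x ≠ 0} ∩ Set.Ioo (0:ℝ) 1 := by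
      intro x ⟨hx1, hx2⟩
      refine ⟨?_, hx2⟩
      have h1 : (0:ℝ) < 1 - x := by have := hx2.2; linarith
      have h0 : (0:ℝ) < x := hx2.1
      have w1 := Real.rpow_pos_of_pos h1 a
      have w2 := Real.rpow_pos_of_pos h0 b
      simp only [Set.mem_setOf_eq, hf]
      exact mul_ne_zero (mul_ne_zero w1.ne' (mul_ne_zero hx1 hx1)) w2.ne'
    have : volume U = 0 := measure_mono_null hUsub hnull
    exact absurd this (hUopen.measure_pos volume ⟨x₀, hx₀ne, hx₀⟩).ne'
  apply hD0
  apply Polynomial.eq_zero_of_infinite_isRoot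
  apply Set.Infinite.mono (s := Set.Ioo (0:ℝ) 1) _ (Set.Ioo_infinite (by norm_num : (0:ℝ) < 1))
  intro x hx
  exact hzero x hx

/-- Lemma (higher derivatives): for the monic Jacobi polynomials on `[0,1]`,
`d^m/dx^m [(1-x)^α P_n^{(α,β)}(x)] = (-1)^m (α+n-m+1)_m (1-x)^{α-m} P_n^{(α-m,β+m)}(x)`
on `(0,1)`, where `(a)_m` is the Pochhammer symbol. -/
theorem stmt_4 (m : ℕ) (hm : 1 ≤ m) (α β : ℝ) (hα : (m : ℝ) - 1 < α) (hβ : -1 < β)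
    (n : ℕ) (P Q : Polynomial ℝ)
    (hPm : P.Monic) (hPdeg : P.natDegree = n)
    (hPorth : ∀ k < n,
      ∫ x in Set.Ioo (0:ℝ) 1, P.eval x * (x ^ β * (1 - x) ^ α) * x ^ k = 0)
    (hQm : Q.Monic) (hQdeg : Q.natDegree = n)
    (hQorth : ∀ k < n,
      ∫ x in Set.Ioo (0:ℝ) 1,
        Q.eval x * (x ^ (β + m) * (1 - x) ^ (α - m)) * x ^ k = 0) :
    ∀ x ∈ Set.Ioo (0:ℝ) 1,
      iteratedDeriv m (fun y => (1 - y) ^ α * P.eval y) x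
        = (-1) ^ m * (∏ i ∈ Finset.range m, (α + n - m + 1 + i))
            * (1 - x) ^ (α - m) * Q.eval x := by
  have hm0 : (0:ℝ) ≤ (m:ℝ) := Nat.cast_nonneg m
  have hαm : (-1:ℝ) < α - m := by linarith
  have hβm : (-1:ℝ) < β + m := by linarith
  -- the leading coefficient
  set lc : ℝ := ∏ i ∈ Finset.range m, (-(α - i + n)) with hlc
  have hfac : ∀ i ∈ Finset.range m, -(α - (i:ℝ) + n) ≠ 0 := by
    intro i hi
    have hi' : (i:ℝ) + 1 ≤ m := by exact_mod_cast Finset.mem_range.1 hi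
    have hn0 : (0:ℝ) ≤ n := Nat.cast_nonneg n
    have h2 : (0:ℝ) < α - i + n := by linarith
    intro hc
    rw [neg_eq_zero] at hc
    exact h2.ne' hc
  have hlcne : lc ≠ 0 := Finset.prod_ne_zero_iff.2 hfac
  have hPn : P.coeff n = 1 := by rw [← hPdeg]; exact hPm.coeff_natDegree
  have hRtop : (Rseq α P m).coeff n = lc := by
    rw [Rseq_coeff_top α P hPdeg.le m, hPn, mul_one]
  -- the candidate polynomial
  set A : ℝ[X] := Polynomial.C lc⁻¹ * Rseq α P m with hA
  have hAn : A.coeff n = 1 := by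
    rw [hA, coeff_C_mul, hRtop, inv_mul_cancel₀ hlcne]
  have hAdeg_le : A.natDegree ≤ n := by
    apply le_trans (natDegree_C_mul_le _ _)
    exact Rseq_natDegree_le α P hPdeg.le m
  have hAm : A.Monic := monic_of_natDegree_le_of_coeff_eq_one n hAdeg_le hAn
  have hAdeg : A.natDegree = n := by
    apply le_antisymm hAdeg_le
    apply le_natDegree_of_ne_zero
    rw [hAn]; exact one_ne_zero
  -- orthogonality of A in canonical form
  have hAorth : ∀ k < n, ∫ x in Set.Ioo (0:ℝ) 1,
      (1 - x) ^ (α - m) * A.eval x * x ^ ((β + m) + k) = 0 := by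
    intro k hk
    have h1 : ∀ x ∈ Set.Ioo (0:ℝ) 1,
        (1 - x) ^ (α - m) * A.eval x * x ^ ((β + m) + k)
          = lc⁻¹ * ((1 - x) ^ (α - m) * (Rseq α P m).eval x * x ^ (β + k + m)) := by
      intro x hx
      rw [hA]
      simp only [eval_mul, eval_C]
      rw [show (β + (m:ℝ)) + k = β + k + m by ring]
      ring
    rw [setIntegral_congr_fun measurableSet_Ioo h1, integral_const_mul,
      orth_Rseq m α β hα hβ n P hPorth k hk, mul_zero]
  -- orthogonality of Q in canonical form
  have hQorth' : ∀ k < n, ∫ x in Set.Ioo (0:ℝ) 1,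
      (1 - x) ^ (α - m) * Q.eval x * x ^ ((β + m) + k) = 0 := by
    intro k hk
    have h1 : ∀ x ∈ Set.Ioo (0:ℝ) 1,
        (1 - x) ^ (α - m) * Q.eval x * x ^ ((β + m) + k)
          = Q.eval x * (x ^ (β + m) * (1 - x) ^ (α - m)) * x ^ k := by
      intro x hx
      rw [Real.rpow_add hx.1, Real.rpow_natCast]
      ring
    rw [setIntegral_congr_fun measurableSet_Ioo h1]
    exact hQorth k hk
  have hAQ : A = Q := orth_unique (α - m) (β + m) hαm hβm n A Q hAm hAdeg hAorth
    hQm hQdeg hQorth'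
  have hRm : Rseq α P m = Polynomial.C lc * Q := by
    rw [← hAQ, hA, ← mul_assoc, ← Polynomial.C_mul, mul_inv_cancel₀ hlcne,
      Polynomial.C_1, one_mul]
  -- the product identity
  have hprod : lc = (-1) ^ m * ∏ i ∈ Finset.range m, (α + n - m + 1 + i) := by
    rw [hlc]
    have h1 : ∀ i ∈ Finset.range m, -(α - (i:ℝ) + n) = (-1) * (α - i + n) := by
      intro i _; ring
    rw [Finset.prod_congr rfl h1, Finset.prod_mul_distrib, Finset.prod_const,
      Finset.card_range]
    congr 1
    rw [← Finset.prod_range_reflect (fun i => α + n - m + 1 + i) m]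
    apply Finset.prod_congr rfl
    intro j hj
    have hj' : j + 1 ≤ m := Finset.mem_range.1 hj
    have hcast : ((m - 1 - j : ℕ) : ℝ) = (m:ℝ) - 1 - j := by
      have he : m - 1 - j = m - (j + 1) := by omega
      rw [he, Nat.cast_sub hj']
      push_cast; ring
    simp only [hcast]
    ring
  -- conclusion
  intro x hx
  rw [iteratedDeriv_eq α P m x hx, hRm]
  simp only [eval_mul, eval_C]
  rw [hprod]
  ring
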